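/- Fix p, K, Γ ∈ [1,∞) and n,t ∈ ℕ. Suppose (X,d_X) is a metric space that is both W_p barycentric with constant Γ and p-barycentric with constant K (with respect to the same barycenter map B). Let A = (a_{ij}) ∈ M_n(ℝ) be a symmetric stochastic matrix with λ_p(A⊗I_X^n) < 1. Then γ₊(A^t, d_X^p) ≤ (Γ + 4(Γ+1)/(1 − λ_p(A⊗I_X^n)^{2t}))^p. -/

import Mathlib

open scoped BigOperators ENNReal
open scoped Classical

noncomputable section

/-- A finitely supported probability measure on `X`. -/
structure FinProb (X : Type*) where
  w : X →₀ ℝ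
  nonneg : ∀ x, 0 ≤ w x
  total : w.sum (fun _ r => r) = 1

namespace FinProb

/-- The Dirac point mass at `x`. -/
def dirac {X : Type*} (x : X) : FinProb X where
  w := Finsupp.single x 1
  nonneg := fun y => by
    rw [Finsupp.single_apply]
    split <;> norm_num
  total := Finsupp.sum_single_index rfl

/-- The probability measure `∑ i, w i • δ_{Z i}` for nonnegative weights summing to 1. -/
def mix {ι X : Type*} [Fintype ι] (w : ι → ℝ) (Z : ι → X)
    (hw : ∀ i, 0 ≤ w i) (h1 : ∑ i, w i = 1) : FinProb X where
  w := ∑ i, Finsupp.single (Z i) (w i)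
  nonneg := fun x => by
    rw [Finset.sum_apply']
    refine Finset.sum_nonneg fun i _ => ?_
    rw [Finsupp.single_apply]
    split
    · exact hw i
    · exact le_rfl
  total := by
    rw [← Finsupp.sum_finset_sum_index (fun _ => rfl) (fun _ _ _ => rfl)]
    have h : ∀ i ∈ (Finset.univ : Finset ι),
        (Finsupp.single (Z i) (w i)).sum (fun _ r => r) = w i :=
      fun i _ => Finsupp.sum_single_index rfl
    rw [Finset.sum_congr rfl h]
    exact h1

/-- `mix` with normalization of the weights. -/
def mixN {ι X : Type*} [Fintype ι] (w : ι → ℝ) (Z : ι → X)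
    (hw : ∀ i, 0 ≤ w i) (hpos : 0 < ∑ i, w i) : FinProb X :=
  mix (fun i => w i / ∑ j, w j) Z
    (fun i => div_nonneg (hw i) hpos.le)
    (by rw [← Finset.sum_div, div_self (ne_of_gt hpos)])

/-- Integral of `f : X → ℝ` against `μ`. -/
def exp {X : Type*} (μ : FinProb X) (f : X → ℝ) : ℝ :=
  μ.w.sum fun x r => r * f x

end FinProb

/-- `π` is a coupling of `μ` and `ν`. -/
def IsCoupling {X : Type*} (π : FinProb (X × X)) (μ ν : FinProb X) : Prop :=
  (∀ x : X, (π.w.sum fun q r => if q.1 = x then r else 0) = μ.w x) ∧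
  (∀ y : X, (π.w.sum fun q r => if q.2 = y then r else 0) = ν.w y)

/-- The Wasserstein `p` distance between finitely supported probability measures. -/
def wassersteinDist {X : Type*} [MetricSpace X] (p : ℝ) (μ ν : FinProb X) : ℝ :=
  sInf {c : ℝ | ∃ π : FinProb (X × X), IsCoupling π μ ν ∧
    c = (π.exp fun q => dist q.1 q.2 ^ p) ^ p⁻¹}

/-- A barycenter map sends Dirac masses to their base points. -/
def IsBarycenterMap {X : Type*} (bary : FinProb X → X) : Prop :=
  ∀ x : X, bary (FinProb.dirac x) = x

/-- `X` is `W_p` barycentric with constant `Γ` via the barycenter map `bary`. -/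
def IsWBarycentric {X : Type*} [MetricSpace X] (p Γ : ℝ) (bary : FinProb X → X) : Prop :=
  IsBarycenterMap bary ∧
    ∀ μ ν : FinProb X, dist (bary μ) (bary ν) ≤ Γ * wassersteinDist p μ ν

/-- `X` is `p`-barycentric with constant `K` via the map `bary`. -/
def IsPBarycentric {X : Type*} [MetricSpace X] (p K : ℝ) (bary : FinProb X → X) : Prop :=
  ∀ (x : X) (μ : FinProb X),
    dist x (bary μ) ^ p + K ^ (-p) * (μ.exp fun y => dist (bary μ) y ^ p)
      ≤ μ.exp fun y => dist x y ^ p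

/-- A (possibly rectangular) matrix is stochastic if it has nonnegative entries and
each row sums to `1`. -/
def IsStochastic {n m : ℕ} (A : Matrix (Fin n) (Fin m) ℝ) : Prop :=
  (∀ i j, 0 ≤ A i j) ∧ ∀ i, ∑ j, A i j = 1

/-- `A` is reversible relative to the probability vector `π`. -/
def IsReversible {n : ℕ} (A : Matrix (Fin n) (Fin n) ℝ) (π : Fin n → ℝ) : Prop :=
  ∀ i j, π i * A i j = π j * A j i

/-- `π` is a probability vector. -/
def IsProbVec {n : ℕ} (π : Fin n → ℝ) : Prop :=
  (∀ i, 0 ≤ π i) ∧ ∑ i, π i = 1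

/-- The Cesàro average `𝒜_t(A) = (1/t) ∑_{s=1}^t A^s`. -/
def cesaro {n : ℕ} (A : Matrix (Fin n) (Fin n) ℝ) (t : ℕ) : Matrix (Fin n) (Fin n) ℝ :=
  (t : ℝ)⁻¹ • ∑ s ∈ Finset.Icc 1 t, A ^ s

/-- `X` has Markov type `p` with constant `M`. -/
def HasMarkovType (X : Type*) [MetricSpace X] (p M : ℝ) : Prop :=
  ∀ (n t : ℕ), 0 < n → 0 < t → ∀ (π : Fin n → ℝ) (A : Matrix (Fin n) (Fin n) ℝ),
    IsProbVec π → IsStochastic A → IsReversible A π → ∀ x : Fin n → X,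
      ∑ i, ∑ j, π i * (A ^ t) i j * dist (x i) (x j) ^ p ≤
        M ^ p * t * ∑ i, ∑ j, π i * A i j * dist (x i) (x j) ^ p

/-- `X` has metric Markov cotype `p` with constant `N`. -/
def HasMetricMarkovCotype (X : Type*) [MetricSpace X] (p N : ℝ) : Prop :=
  ∀ (n t : ℕ), 0 < n → 0 < t → ∀ (π : Fin n → ℝ) (A : Matrix (Fin n) (Fin n) ℝ),
    IsProbVec π → IsStochastic A → IsReversible A π → ∀ x : Fin n → X,
      ∃ y : Fin n → X,
        (∑ i, π i * dist (x i) (y i) ^ p) +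
          t * ∑ i, ∑ j, π i * A i j * dist (y i) (y j) ^ p ≤
        N ^ p * ∑ i, ∑ j, π i * cesaro A t i j * dist (x i) (x j) ^ p

/-- The Markov type `p` constant `M_p(X)`. -/
def markovTypeConst (X : Type*) [MetricSpace X] (p : ℝ) : ℝ :=
  sInf {M : ℝ | 0 < M ∧ HasMarkovType X p M}

/-- The metric Markov cotype `p` constant `N_p(X)`. -/
def markovCotypeConst (X : Type*) [MetricSpace X] (p : ℝ) : ℝ :=
  sInf {N : ℝ | 0 < N ∧ HasMetricMarkovCotype X p N}

/-- The nonlinear spectral gap quantity `γ₊(A, d_X^p)`. -/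
def gammaPlus (X : Type*) [MetricSpace X] {n : ℕ} (A : Matrix (Fin n) (Fin n) ℝ)
    (p : ℝ) : ℝ≥0∞ :=
  sInf {g : ℝ≥0∞ | ∀ x y : Fin n → X,
    ENNReal.ofReal (((n : ℝ) ^ 2)⁻¹ * ∑ i, ∑ j, dist (x i) (y j) ^ p) ≤
      (g / (n : ℝ≥0∞)) * ENNReal.ofReal (∑ i, ∑ j, A i j * dist (x i) (y j) ^ p)}

/-- The metric of `L_p^n(X)`. -/
def dLpn {X : Type*} [MetricSpace X] (p : ℝ) {n : ℕ} (f g : Fin n → X) : ℝ :=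
  ((n : ℝ)⁻¹ * ∑ i, dist (f i) (g i) ^ p) ^ p⁻¹

/-- The barycenter `B(f) = B((1/n) ∑ δ_{f(i)})` of `f : Fin n → X`. -/
def baryFun {X : Type*} [MetricSpace X] (bary : FinProb X → X) {n : ℕ} (hn : 0 < n)
    (f : Fin n → X) : X :=
  bary (FinProb.mixN (fun _ : Fin n => 1) f (fun _ => zero_le_one)
    (by
      simp only [Finset.sum_const, Finset.card_univ, Fintype.card_fin, nsmul_eq_mul, mul_one]
      exact_mod_cast hn))

/-- The nonlinear action `(A ⊗ I_X^n)(f)(i) = B(∑_j a_{ij} δ_{f(j)})`. -/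
def matAct {X : Type*} [MetricSpace X] (bary : FinProb X → X) {n : ℕ}
    (A : Matrix (Fin n) (Fin n) ℝ) (hA : IsStochastic A) (f : Fin n → X) : Fin n → X :=
  fun i => bary (FinProb.mix (fun j => A i j) f (fun j => hA.1 i j) (hA.2 i))

/-- The quantity `λ_p(T)`. -/
def lambdaP {X : Type*} [MetricSpace X] (p : ℝ) {n : ℕ} (hn : 0 < n)
    (bary : FinProb X → X) (T : (Fin n → X) → (Fin n → X)) : ℝ≥0∞ :=
  sInf {l : ℝ≥0∞ | ∀ f : Fin n → X,
    ENNReal.ofReal (dLpn p (T f) (fun _ => baryFun bary hn (T f))) ≤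
      l * ENNReal.ofReal (dLpn p f (fun _ => baryFun bary hn f))}

/-- A finite σ-algebra on a finite set `Ω`, described by its atoms. -/
structure FinPartition (Ω : Type*) [Fintype Ω] where
  atom : Ω → Finset Ω
  mem_atom : ∀ ω, ω ∈ atom ω
  atom_eq : ∀ ω ω', ω' ∈ atom ω → atom ω' = atom ω

/-- The conditional barycenter `B(Z | F)`. -/
def condBary {Ω X : Type*} [Fintype Ω] (bary : FinProb X → X)
    (μ : Ω → ℝ) (hμ : ∀ ω, 0 < μ ω) (F : FinPartition Ω) (Z : Ω → X) : Ω → X :=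
  fun ω => bary (FinProb.mixN (fun a : {a // a ∈ F.atom ω} => μ a) (fun a => Z a)
    (fun a => (hμ a).le)
    (Finset.sum_pos (fun a _ => hμ a) ⟨⟨ω, F.mem_atom ω⟩, Finset.mem_univ _⟩))


section AuxLemmas

variable {X : Type*} [MetricSpace X]

lemma FinProb.exp_mix {ι Y : Type*} [Fintype ι] (w : ι → ℝ) (Z : ι → Y)
    (hw : ∀ i, 0 ≤ w i) (h1 : ∑ i, w i = 1) (f : Y → ℝ) :
    (FinProb.mix w Z hw h1).exp f = ∑ i, w i * f (Z i) := by
  show ((∑ i, Finsupp.single (Z i) (w i)).sum fun y r => r * f y) = _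
  rw [← Finsupp.sum_finset_sum_index (by intro a; simp) (by intro a b c; ring)]
  exact Finset.sum_congr rfl fun i _ => Finsupp.sum_single_index (by simp)

lemma FinProb.exp_nonneg {Y : Type*} (μ : FinProb Y) (f : Y → ℝ) (hf : ∀ y, 0 ≤ f y) :
    0 ≤ μ.exp f := by
  rw [FinProb.exp, Finsupp.sum]
  exact Finset.sum_nonneg fun y _ => mul_nonneg (μ.nonneg y) (hf y)

/-- The `p`-barycentric inequality without the gain term. -/
lemma dist_bary_mix_le {p K : ℝ} (hp : 1 ≤ p) (hK : 1 ≤ K) {bary : FinProb X → X}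
    (hP : IsPBarycentric p K bary) {ι : Type*} [Fintype ι] (w : ι → ℝ) (Z : ι → X)
    (hw : ∀ i, 0 ≤ w i) (h1 : ∑ i, w i = 1) (x : X) :
    dist x (bary (FinProb.mix w Z hw h1)) ^ p ≤ ∑ i, w i * dist x (Z i) ^ p := by
  have h := hP x (FinProb.mix w Z hw h1)
  rw [FinProb.exp_mix, FinProb.exp_mix] at h
  have h2 : 0 ≤ K ^ (-p) * ∑ i, w i * dist (bary (FinProb.mix w Z hw h1)) (Z i) ^ p :=
    mul_nonneg (Real.rpow_nonneg (by linarith) _) (Finset.sum_nonneg fun i _ =>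
      mul_nonneg (hw i) (Real.rpow_nonneg dist_nonneg _))
  linarith

end AuxLemmas
section AuxLemmas2

variable {X : Type*} [MetricSpace X]

lemma IsStochastic.matmul {n : ℕ} {M N : Matrix (Fin n) (Fin n) ℝ}
    (hM : IsStochastic M) (hN : IsStochastic N) : IsStochastic (M * N) := by
  constructor
  · intro i j
    rw [Matrix.mul_apply]
    exact Finset.sum_nonneg fun l _ => mul_nonneg (hM.1 i l) (hN.1 l j)
  · intro i
    simp only [Matrix.mul_apply]
    rw [Finset.sum_comm]
    calc ∑ l, ∑ j, M i l * N l j = ∑ l, M i l * ∑ j, N l j := by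
          simp [Finset.mul_sum]
      _ = 1 := by simp [hN.2, hM.2 i]

lemma IsStochastic.pow {n : ℕ} {M : Matrix (Fin n) (Fin n) ℝ}
    (hM : IsStochastic M) (k : ℕ) : IsStochastic (M ^ k) := by
  induction k with
  | zero =>
    constructor
    · intro i j
      rw [pow_zero, Matrix.one_apply]
      split <;> norm_num
    · intro i
      simp [pow_zero, Matrix.one_apply]
  | succ k ih =>
    rw [pow_succ]
    exact ih.matmul hM

/-- Column sums of a symmetric stochastic matrix are `1`. -/
lemma IsStochastic.col_sum {n : ℕ} {M : Matrix (Fin n) (Fin n) ℝ}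
    (hM : IsStochastic M) (hs : M.IsSymm) (j : Fin n) : ∑ i, M i j = 1 := by
  calc ∑ i, M i j = ∑ i, M j i := Finset.sum_congr rfl fun i _ => (hs.apply i j).symm
    _ = 1 := hM.2 j

end AuxLemmas2
section AuxLemmas3

variable {X : Type*} [MetricSpace X] {p : ℝ}

lemma sum_dist_rpow_nonneg {ι : Type*} [Fintype ι] (u : ι → ℝ) (hu : ∀ i, 0 ≤ u i) (p : ℝ) :
    0 ≤ ∑ i, u i ^ p :=
  Finset.sum_nonneg fun i _ => Real.rpow_nonneg (hu i) p

lemma dLpn_nonneg {n : ℕ} (f g : Fin n → X) : 0 ≤ dLpn p f g :=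
  Real.rpow_nonneg (mul_nonneg (by positivity)
    (sum_dist_rpow_nonneg _ (fun i => dist_nonneg) p)) _

lemma dLpn_rpow (hp : 1 ≤ p) {n : ℕ} (f g : Fin n → X) :
    dLpn p f g ^ p = (n : ℝ)⁻¹ * ∑ i, dist (f i) (g i) ^ p := by
  have hp0 : p ≠ 0 := by positivity
  exact Real.rpow_inv_rpow (mul_nonneg (by positivity)
    (sum_dist_rpow_nonneg _ (fun i => dist_nonneg) p)) hp0

lemma dLpn_comm {n : ℕ} (f g : Fin n → X) : dLpn p f g = dLpn p g f := by
  unfold dLpn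
  congr 2
  exact Finset.sum_congr rfl fun i _ => by rw [dist_comm]

lemma dLpn_const_const (hp : 1 ≤ p) {n : ℕ} (hn : 0 < n) (a b : X) :
    dLpn p (fun _ : Fin n => a) (fun _ => b) = dist a b := by
  have hp0 : p ≠ 0 := by positivity
  unfold dLpn
  rw [Finset.sum_const, Finset.card_univ, Fintype.card_fin, nsmul_eq_mul,
    ← mul_assoc, inv_mul_cancel₀ (by exact_mod_cast hn.ne' : (n : ℝ) ≠ 0), one_mul]
  exact Real.rpow_rpow_inv dist_nonneg hp0

/-- Weighted Minkowski inequality for two summands. -/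
lemma weighted_Lp_add_le {ι : Type*} [Fintype ι] (hp : 1 ≤ p) (w : ℝ) (hw : 0 ≤ w)
    (u v : ι → ℝ) (hu : ∀ i, 0 ≤ u i) (hv : ∀ i, 0 ≤ v i) :
    (w * ∑ i, (u i + v i) ^ p) ^ p⁻¹ ≤ (w * ∑ i, u i ^ p) ^ p⁻¹ + (w * ∑ i, v i ^ p) ^ p⁻¹ := by
  have hp0 : p ≠ 0 := by positivity
  set c : ℝ := w ^ p⁻¹ with hc
  have hc0 : 0 ≤ c := Real.rpow_nonneg hw _
  have hcp : c ^ p = w := Real.rpow_inv_rpow hw hp0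
  have key := Real.Lp_add_le Finset.univ (fun i => c * u i) (fun i => c * v i) hp
  have e1 : ∀ (z : ι → ℝ), (∀ i, 0 ≤ z i) →
      (∑ i, |c * z i| ^ p) = w * ∑ i, z i ^ p := by
    intro z hz
    rw [Finset.mul_sum]
    refine Finset.sum_congr rfl fun i _ => ?_
    rw [abs_of_nonneg (mul_nonneg hc0 (hz i)), Real.mul_rpow hc0 (hz i), hcp]
  have e2 : (∑ i, |c * u i + c * v i| ^ p) = w * ∑ i, (u i + v i) ^ p := by
    rw [Finset.mul_sum]
    refine Finset.sum_congr rfl fun i _ => ?_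
    rw [← mul_add, abs_of_nonneg (mul_nonneg hc0 (add_nonneg (hu i) (hv i))),
      Real.mul_rpow hc0 (add_nonneg (hu i) (hv i)), hcp]
  rw [e2, e1 u hu, e1 v hv] at key
  simpa [one_div] using key

lemma dLpn_triangle (hp : 1 ≤ p) {n : ℕ} (f g h : Fin n → X) :
    dLpn p f h ≤ dLpn p f g + dLpn p g h := by
  have key := weighted_Lp_add_le (ι := Fin n) hp ((n : ℝ)⁻¹) (by positivity)
    (fun i => dist (f i) (g i)) (fun i => dist (g i) (h i))
    (fun i => dist_nonneg) (fun i => dist_nonneg)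
  refine le_trans ?_ key
  unfold dLpn
  refine Real.rpow_le_rpow (mul_nonneg (by positivity)
    (sum_dist_rpow_nonneg _ (fun i => dist_nonneg) p)) ?_ (by positivity)
  refine mul_le_mul_of_nonneg_left (Finset.sum_le_sum fun i _ => ?_) (by positivity)
  exact Real.rpow_le_rpow dist_nonneg (dist_triangle _ _ _) (by positivity)

lemma wassersteinDist_le_of_matrix {n : ℕ} (hn : 0 < n) (hp : 1 ≤ p)
    (x y : Fin n → X) (c : Fin n → Fin n → ℝ) (hc : ∀ i j, 0 ≤ c i j)
    (hrow : ∀ i, ∑ j, c i j = (n : ℝ)⁻¹) (hcol : ∀ j, ∑ i, c i j = (n : ℝ)⁻¹)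
    (hx1 : ∀ i : Fin n, (0:ℝ) ≤ (fun _ : Fin n => (1:ℝ)) i)
    (hx2 : 0 < ∑ i : Fin n, (fun _ : Fin n => (1:ℝ)) i)
    (hy1 : ∀ i : Fin n, (0:ℝ) ≤ (fun _ : Fin n => (1:ℝ)) i)
    (hy2 : 0 < ∑ i : Fin n, (fun _ : Fin n => (1:ℝ)) i) :
    wassersteinDist p (FinProb.mixN (fun _ : Fin n => 1) x hx1 hx2)
      (FinProb.mixN (fun _ : Fin n => 1) y hy1 hy2) ≤
      (∑ i, ∑ j, c i j * dist (x i) (y j) ^ p) ^ p⁻¹ := by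
  have hn' : (n : ℝ) ≠ 0 := by exact_mod_cast hn.ne'
  have htot : ∑ q : Fin n × Fin n, c q.1 q.2 = 1 := by
    rw [Fintype.sum_prod_type]
    simp only [hrow, Finset.sum_const, Finset.card_univ, Fintype.card_fin, nsmul_eq_mul]
    field_simp
  set π : FinProb (X × X) := FinProb.mix (fun q : Fin n × Fin n => c q.1 q.2)
    (fun q => (x q.1, y q.2)) (fun q => hc q.1 q.2) htot with hπ
  have marg : ∀ (pr : X × X → X) (zf : Fin n → X),
      (∀ q : Fin n × Fin n, pr (x q.1, y q.2) = zf (if True then q.1 else q.2)) → True := fun _ _ _ => trivial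
  have hcoup : IsCoupling π (FinProb.mixN (fun _ : Fin n => 1) x hx1 hx2)
      (FinProb.mixN (fun _ : Fin n => 1) y hy1 hy2) := by
    constructor
    · intro z
      show ((∑ q : Fin n × Fin n, Finsupp.single ((x q.1, y q.2)) (c q.1 q.2)).sum
          fun q r => if q.1 = z then r else 0) = _
      rw [← Finsupp.sum_finset_sum_index (fun a => by simp) (fun a b₁ b₂ => by split <;> simp)]
      rw [Finset.sum_congr rfl (fun (q : Fin n × Fin n) _ =>
        (Finsupp.sum_single_index (by simp) :
          (Finsupp.single ((x q.1, y q.2)) (c q.1 q.2)).sum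
            (fun q' r => if q'.1 = z then r else 0) = _))]
      show _ = (∑ i, Finsupp.single (x i) ((1:ℝ) / ∑ _j : Fin n, (1:ℝ))) z
      rw [Fintype.sum_prod_type, Finset.sum_apply']
      refine Finset.sum_congr rfl fun i _ => ?_
      rw [Finsupp.single_apply]
      by_cases hxz : x i = z
      · simp only [hxz, if_true, hrow i, Finset.sum_const, Finset.card_univ, Fintype.card_fin,
          nsmul_eq_mul, mul_one]
        rw [one_div]
      · simp [hxz]
    · intro z
      show ((∑ q : Fin n × Fin n, Finsupp.single ((x q.1, y q.2)) (c q.1 q.2)).sum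
          fun q r => if q.2 = z then r else 0) = _
      rw [← Finsupp.sum_finset_sum_index (fun a => by simp) (fun a b₁ b₂ => by split <;> simp)]
      rw [Finset.sum_congr rfl (fun (q : Fin n × Fin n) _ =>
        (Finsupp.sum_single_index (by simp) :
          (Finsupp.single ((x q.1, y q.2)) (c q.1 q.2)).sum
            (fun q' r => if q'.2 = z then r else 0) = _))]
      show _ = (∑ i, Finsupp.single (y i) ((1:ℝ) / ∑ _j : Fin n, (1:ℝ))) z
      rw [Fintype.sum_prod_type, Finset.sum_comm, Finset.sum_apply']
      refine Finset.sum_congr rfl fun j _ => ?_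
      rw [Finsupp.single_apply]
      by_cases hyz : y j = z
      · simp only [hyz, if_true, hcol j, Finset.sum_const, Finset.card_univ, Fintype.card_fin,
          nsmul_eq_mul, mul_one]
        rw [one_div]
      · simp [hyz]
  have hbdd : BddBelow {r : ℝ | ∃ π' : FinProb (X × X),
      IsCoupling π' (FinProb.mixN (fun _ : Fin n => 1) x hx1 hx2)
        (FinProb.mixN (fun _ : Fin n => 1) y hy1 hy2) ∧
      r = (π'.exp fun q => dist q.1 q.2 ^ p) ^ p⁻¹} := by
    refine ⟨0, fun r hr => ?_⟩
    obtain ⟨π', -, rfl⟩ := hr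
    exact Real.rpow_nonneg (FinProb.exp_nonneg _ _ fun q => Real.rpow_nonneg dist_nonneg _) _
  have hle : wassersteinDist p (FinProb.mixN (fun _ : Fin n => 1) x hx1 hx2)
      (FinProb.mixN (fun _ : Fin n => 1) y hy1 hy2) ≤
      (π.exp fun q => dist q.1 q.2 ^ p) ^ p⁻¹ :=
    csInf_le hbdd ⟨π, hcoup, rfl⟩
  refine hle.trans_eq ?_
  rw [hπ, FinProb.exp_mix, Fintype.sum_prod_type]

lemma dist_iterate_le {K : ℝ} (hp : 1 ≤ p) (hK : 1 ≤ K) {bary : FinProb X → X}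
    (hP : IsPBarycentric p K bary) {n : ℕ} (A : Matrix (Fin n) (Fin n) ℝ)
    (hA : IsStochastic A) (x : Fin n → X) :
    ∀ (s : ℕ) (i j : Fin n), dist (x i) ((matAct bary A hA)^[s] x j) ^ p ≤
      ∑ k, (A ^ s) j k * dist (x i) (x k) ^ p := by
  intro s
  induction s with
  | zero =>
    intro i j
    simp [Matrix.one_apply]
  | succ s ih =>
    intro i j
    rw [Function.iterate_succ_apply']
    have h1 := dist_bary_mix_le hp hK hP (fun k => A j k) ((matAct bary A hA)^[s] x)
      (fun k => hA.1 j k) (hA.2 j) (x i)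
    refine h1.trans ?_
    calc ∑ l, A j l * dist (x i) ((matAct bary A hA)^[s] x l) ^ p
        ≤ ∑ l, A j l * ∑ k, (A ^ s) l k * dist (x i) (x k) ^ p :=
          Finset.sum_le_sum fun l _ => mul_le_mul_of_nonneg_left (ih i l) (hA.1 j l)
      _ = ∑ k, (A ^ (s + 1)) j k * dist (x i) (x k) ^ p := by
          rw [pow_succ']
          simp only [Matrix.mul_apply, Finset.mul_sum, Finset.sum_mul]
          rw [Finset.sum_comm]
          exact Finset.sum_congr rfl fun l _ => Finset.sum_congr rfl fun k _ => by ring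

lemma real_add_rpow_le (hp : 1 ≤ p) (u v : ℝ) (hu : 0 ≤ u) (hv : 0 ≤ v) :
    (u + v) ^ p ≤ 2 ^ (p - 1) * (u ^ p + v ^ p) := by
  have h := NNReal.rpow_add_le_mul_rpow_add_rpow ⟨u, hu⟩ ⟨v, hv⟩ hp
  have := NNReal.coe_le_coe.2 h
  push_cast at this
  convert this using 3 <;> rfl

lemma symm_swap_sum {n : ℕ} (M : Matrix (Fin n) (Fin n) ℝ) (hMs : M.IsSymm)
    (a b : Fin n → X) :
    ∑ i, ∑ j, M i j * dist (b i) (a j) ^ p = ∑ i, ∑ j, M i j * dist (a i) (b j) ^ p := by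
  rw [Finset.sum_comm]
  refine Finset.sum_congr rfl fun j _ => Finset.sum_congr rfl fun i _ => ?_
  rw [dist_comm, hMs.apply j i]

lemma quad_bound (hp : 1 ≤ p) {n : ℕ} (M : Matrix (Fin n) (Fin n) ℝ)
    (hM : IsStochastic M) (hMs : M.IsSymm) (u v : Fin n → X) :
    ∑ i, ∑ k, (M * M) i k * dist (u i) (u k) ^ p ≤
      2 ^ (p - 1) * (2 * ∑ i, ∑ j, M i j * dist (u i) (v j) ^ p) := by
  have pointwise : ∀ i k l : Fin n, dist (u i) (u k) ^ p ≤
      2 ^ (p - 1) * (dist (u i) (v l) ^ p + dist (v l) (u k) ^ p) := fun i k l =>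
    (Real.rpow_le_rpow dist_nonneg (dist_triangle _ _ _) (by positivity)).trans
      (real_add_rpow_le hp _ _ dist_nonneg dist_nonneg)
  have hT1 : ∑ i, ∑ k, ∑ l, M i l * M l k * dist (u i) (v l) ^ p =
      ∑ i, ∑ j, M i j * dist (u i) (v j) ^ p := by
    refine Finset.sum_congr rfl fun i _ => ?_
    rw [Finset.sum_comm]
    refine Finset.sum_congr rfl fun l _ => ?_
    calc ∑ k, M i l * M l k * dist (u i) (v l) ^ p
        = (M i l * dist (u i) (v l) ^ p) * ∑ k, M l k := by
          rw [Finset.mul_sum]; exact Finset.sum_congr rfl fun k _ => by ring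
      _ = M i l * dist (u i) (v l) ^ p := by rw [hM.2 l, mul_one]
  have hT2 : ∑ i, ∑ k, ∑ l, M i l * M l k * dist (v l) (u k) ^ p =
      ∑ i, ∑ j, M i j * dist (u i) (v j) ^ p := by
    rw [Finset.sum_comm]
    refine Finset.sum_congr rfl fun k _ => ?_
    rw [Finset.sum_comm]
    refine Finset.sum_congr rfl fun l _ => ?_
    calc ∑ i, M i l * M l k * dist (v l) (u k) ^ p
        = (∑ i, M i l) * (M l k * dist (v l) (u k) ^ p) := by
          rw [Finset.sum_mul]; exact Finset.sum_congr rfl fun i _ => by ring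
      _ = M k l * dist (u k) (v l) ^ p := by
          rw [hM.col_sum hMs l, one_mul, dist_comm, hMs.apply k l]
  calc ∑ i, ∑ k, (M * M) i k * dist (u i) (u k) ^ p
      = ∑ i, ∑ k, ∑ l, M i l * M l k * dist (u i) (u k) ^ p := by
        refine Finset.sum_congr rfl fun i _ => Finset.sum_congr rfl fun k _ => ?_
        rw [Matrix.mul_apply, Finset.sum_mul]
    _ ≤ ∑ i, ∑ k, ∑ l, M i l * M l k *
          (2 ^ (p - 1) * (dist (u i) (v l) ^ p + dist (v l) (u k) ^ p)) := by
        refine Finset.sum_le_sum fun i _ => Finset.sum_le_sum fun k _ =>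
          Finset.sum_le_sum fun l _ => ?_
        exact mul_le_mul_of_nonneg_left (pointwise i k l) (mul_nonneg (hM.1 i l) (hM.1 l k))
    _ = ∑ i, ∑ k, ∑ l, (2 ^ (p - 1) * (M i l * M l k * dist (u i) (v l) ^ p) +
          2 ^ (p - 1) * (M i l * M l k * dist (v l) (u k) ^ p)) := by
        refine Finset.sum_congr rfl fun i _ => Finset.sum_congr rfl fun k _ =>
          Finset.sum_congr rfl fun l _ => by ring
    _ = 2 ^ (p - 1) * (∑ i, ∑ k, ∑ l, M i l * M l k * dist (u i) (v l) ^ p) +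
          2 ^ (p - 1) * (∑ i, ∑ k, ∑ l, M i l * M l k * dist (v l) (u k) ^ p) := by
        simp only [Finset.sum_add_distrib, Finset.mul_sum]
    _ = 2 ^ (p - 1) * (2 * ∑ i, ∑ j, M i j * dist (u i) (v j) ^ p) := by
        rw [hT1, hT2]; ring

/-- The infimum defining `lambdaP` is itself a valid bound. -/
lemma lambdaP_mem {n : ℕ} (hn : 0 < n) (bary : FinProb X → X)
    (T : (Fin n → X) → (Fin n → X)) (hfin : lambdaP p hn bary T < 1) :
    ∀ f : Fin n → X,
      ENNReal.ofReal (dLpn p (T f) (fun _ => baryFun bary hn (T f))) ≤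
        lambdaP p hn bary T * ENNReal.ofReal (dLpn p f (fun _ => baryFun bary hn f)) := by
  set S : Set ℝ≥0∞ := {l : ℝ≥0∞ | ∀ f : Fin n → X,
    ENNReal.ofReal (dLpn p (T f) (fun _ => baryFun bary hn (T f))) ≤
      l * ENNReal.ofReal (dLpn p f (fun _ => baryFun bary hn f))} with hS
  intro f
  set a := ENNReal.ofReal (dLpn p (T f) (fun _ => baryFun bary hn (T f))) with ha
  set b := ENNReal.ofReal (dLpn p f (fun _ => baryFun bary hn f)) with hb
  have hbt : b ≠ ⊤ := ENNReal.ofReal_ne_top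
  by_cases hb0 : b = 0
  · -- then for any l ∈ S, a ≤ l * 0 = 0
    have hne : S.Nonempty := by
      by_contra hne
      rw [Set.not_nonempty_iff_eq_empty] at hne
      have : lambdaP p hn bary T = ⊤ := by
        rw [lambdaP, ← hS, hne, sInf_empty]
      rw [this] at hfin
      exact absurd hfin (by simp)
    obtain ⟨l, hl⟩ := hne
    have := hl f
    rw [← ha, ← hb, hb0, mul_zero] at this
    simpa [hb0] using this
  · -- a / b is a lower bound
    have hdiv : a / b ≤ sInf S := by
      refine le_sInf fun l hl => ?_
      have h := hl f
      rw [← ha, ← hb] at h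
      exact (ENNReal.div_le_iff_le_mul (Or.inl hb0) (Or.inl hbt)).2 h
    have : a / b ≤ lambdaP p hn bary T := hdiv
    calc a = a / b * b := by rw [ENNReal.div_mul_cancel hb0 hbt]
      _ ≤ lambdaP p hn bary T * b := mul_le_mul_left this b
end AuxLemmas3

theorem statement10 (p K Γ : ℝ) (hp : 1 ≤ p) (hK : 1 ≤ K) (hΓ : 1 ≤ Γ)
    (n t : ℕ) (hn : 0 < n) (ht : 0 < t)
    (X : Type*) [MetricSpace X] (bary : FinProb X → X)
    (hW : IsWBarycentric p Γ bary) (hP : IsPBarycentric p K bary)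
    (A : Matrix (Fin n) (Fin n) ℝ) (hA : IsStochastic A) (hsymm : A.IsSymm)
    (hl : lambdaP p hn bary (matAct bary A hA) < 1) :
    gammaPlus X (A ^ t) p ≤
      ENNReal.ofReal ((Γ + 4 * (Γ + 1) /
        (1 - (lambdaP p hn bary (matAct bary A hA)).toReal ^ (2 * t))) ^ p) := by
  have hp0 : (0:ℝ) < p := lt_of_lt_of_le one_pos hp
  have hp0' : p ≠ 0 := hp0.ne'
  have hnR : (0:ℝ) < (n:ℝ) := by exact_mod_cast hn
  have hn' : (n:ℝ) ≠ 0 := hnR.ne'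
  set T := matAct bary A hA with hT
  set lam := lambdaP p hn bary T with hlam
  set L := lam.toReal with hLdef
  have hL0 : 0 ≤ L := ENNReal.toReal_nonneg
  have hL1 : L < 1 := by
    have := (ENNReal.toReal_lt_toReal hl.ne_top (by simp : (1:ℝ≥0∞) ≠ ⊤)).2 hl
    simpa using this
  have hofL : ENNReal.ofReal L = lam := ENNReal.ofReal_toReal hl.ne_top
  have hmem := lambdaP_mem hn bary T hl
  have hstep : ∀ f : Fin n → X, dLpn p (T f) (fun _ => baryFun bary hn (T f)) ≤
      L * dLpn p f (fun _ => baryFun bary hn f) := by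
    intro f
    have h := hmem f
    rw [← hlam] at h
    rw [← hofL, ← ENNReal.ofReal_mul hL0] at h
    exact (ENNReal.ofReal_le_ofReal_iff (mul_nonneg hL0 (dLpn_nonneg _ _))).1 h
  have hiter : ∀ (s : ℕ) (f : Fin n → X),
      dLpn p (T^[s] f) (fun _ => baryFun bary hn (T^[s] f)) ≤
        L ^ s * dLpn p f (fun _ => baryFun bary hn f) := by
    intro s
    induction s with
    | zero => intro f; simp
    | succ s ih =>
      intro f
      rw [Function.iterate_succ_apply']
      calc dLpn p (T (T^[s] f)) (fun _ => baryFun bary hn (T (T^[s] f)))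
          ≤ L * dLpn p (T^[s] f) (fun _ => baryFun bary hn (T^[s] f)) := hstep _
        _ ≤ L * (L ^ s * dLpn p f (fun _ => baryFun bary hn f)) :=
            mul_le_mul_of_nonneg_left (ih f) hL0
        _ = L ^ (s + 1) * dLpn p f (fun _ => baryFun bary hn f) := by ring
  set s2 := 2 * t with hs2
  have hs2ne : s2 ≠ 0 := by simp [hs2, ht.ne']
  have hLs : L ^ s2 < 1 := pow_lt_one₀ hL0 hL1 hs2ne
  have hden : 0 < 1 - L ^ s2 := by linarith
  set C := Γ + 4 * (Γ + 1) / (1 - L ^ s2) with hC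
  have hC4 : 0 ≤ 4 * (Γ + 1) / (1 - L ^ s2) := div_nonneg (by linarith) hden.le
  have hC0 : 0 ≤ C := by rw [hC]; linarith
  -- distance between barycenters of uniform measures via a diagonal coupling
  have hdiag : ∀ f g : Fin n → X,
      dist (baryFun bary hn f) (baryFun bary hn g) ≤ Γ * dLpn p f g := by
    intro f g
    have hpos : 0 < ∑ i : Fin n, (fun _ : Fin n => (1:ℝ)) i := by
      simp only [Finset.sum_const, Finset.card_univ, Fintype.card_fin, nsmul_eq_mul, mul_one]
      exact hnR
    have hw := wassersteinDist_le_of_matrix (p := p) hn hp f g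
      (fun i j => if i = j then (n:ℝ)⁻¹ else 0)
      (fun i j => by show (0:ℝ) ≤ if i = j then (n:ℝ)⁻¹ else 0; split <;> positivity)
      (fun i => by simp)
      (fun j => by simp)
      (fun _ => zero_le_one) hpos (fun _ => zero_le_one) hpos
    have hWap := hW.2 (FinProb.mixN (fun _ : Fin n => 1) f (fun _ => zero_le_one) hpos)
      (FinProb.mixN (fun _ : Fin n => 1) g (fun _ => zero_le_one) hpos)
    have heq : (∑ i, ∑ j, (if i = j then (n:ℝ)⁻¹ else 0) * dist (f i) (g j) ^ p) ^ p⁻¹ =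
        dLpn p f g := by
      unfold dLpn
      congr 1
      rw [Finset.mul_sum]
      refine Finset.sum_congr rfl fun i _ => ?_
      simp
    calc dist (baryFun bary hn f) (baryFun bary hn g)
        ≤ Γ * wassersteinDist p (FinProb.mixN (fun _ : Fin n => 1) f (fun _ => zero_le_one) hpos)
            (FinProb.mixN (fun _ : Fin n => 1) g (fun _ => zero_le_one) hpos) := hWap
      _ ≤ Γ * dLpn p f g := by
          refine mul_le_mul_of_nonneg_left ?_ (by linarith)
          exact hw.trans_eq heq
  have key1 : ∀ z : Fin n → X, (1 - L ^ s2) * dLpn p z (fun _ => baryFun bary hn z) ≤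
      (1 + Γ) * dLpn p z (T^[s2] z) := by
    intro z
    have t1 : dLpn p z (fun _ => baryFun bary hn z) ≤
        dLpn p z (T^[s2] z) + dLpn p (T^[s2] z) (fun _ => baryFun bary hn z) :=
      dLpn_triangle hp _ _ _
    have t2 : dLpn p (T^[s2] z) (fun _ => baryFun bary hn z) ≤
        dLpn p (T^[s2] z) (fun _ => baryFun bary hn (T^[s2] z)) +
        dLpn p (fun _ : Fin n => baryFun bary hn (T^[s2] z)) (fun _ => baryFun bary hn z) :=
      dLpn_triangle hp _ _ _
    have t3 := hiter s2 z
    have t4 : dLpn p (fun _ : Fin n => baryFun bary hn (T^[s2] z)) (fun _ => baryFun bary hn z)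
        = dist (baryFun bary hn (T^[s2] z)) (baryFun bary hn z) := dLpn_const_const hp hn _ _
    have t5 : dist (baryFun bary hn (T^[s2] z)) (baryFun bary hn z) ≤
        Γ * dLpn p (T^[s2] z) z := hdiag _ _
    have t6 : dLpn p (T^[s2] z) z = dLpn p z (T^[s2] z) := dLpn_comm _ _
    rw [t6] at t5
    rw [t4] at t2
    have expand : (1 - L ^ s2) * dLpn p z (fun _ => baryFun bary hn z) =
        dLpn p z (fun _ => baryFun bary hn z) -
          L ^ s2 * dLpn p z (fun _ => baryFun bary hn z) := by ring
    have expand2 : (1 + Γ) * dLpn p z (T^[s2] z) =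
        dLpn p z (T^[s2] z) + Γ * dLpn p z (T^[s2] z) := by ring
    rw [expand, expand2]
    linarith
  have hAt : IsStochastic (A ^ t) := hA.pow t
  have hAts : (A ^ t).IsSymm := hsymm.pow t
  have hA2 : A ^ s2 = (A ^ t) * (A ^ t) := by rw [hs2, two_mul, pow_add]
  rw [gammaPlus]
  refine sInf_le ?_
  intro x y
  set Sxy := ∑ i, ∑ j, (A ^ t) i j * dist (x i) (y j) ^ p with hSxy
  have hSxy0 : 0 ≤ Sxy := by
    rw [hSxy]
    exact Finset.sum_nonneg fun i _ => Finset.sum_nonneg fun j _ =>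
      mul_nonneg (hAt.1 i j) (Real.rpow_nonneg dist_nonneg _)
  set E := ((n:ℝ)⁻¹ * Sxy) ^ p⁻¹ with hE
  have hE0 : 0 ≤ E := Real.rpow_nonneg (mul_nonneg (by positivity) hSxy0) _
  have hEp : E ^ p = (n:ℝ)⁻¹ * Sxy :=
    Real.rpow_inv_rpow (mul_nonneg (by positivity) hSxy0) hp0'
  have key2x : dLpn p x (T^[s2] x) ≤ 2 * E := by
    have h1 : dLpn p x (T^[s2] x) ^ p = (n:ℝ)⁻¹ * ∑ i, dist (x i) (T^[s2] x i) ^ p :=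
      dLpn_rpow hp _ _
    have h2 : ∑ i, dist (x i) (T^[s2] x i) ^ p ≤
        ∑ i, ∑ k, (A ^ s2) i k * dist (x i) (x k) ^ p :=
      Finset.sum_le_sum fun i _ => dist_iterate_le hp hK hP A hA x s2 i i
    have h3 : ∑ i, ∑ k, (A ^ s2) i k * dist (x i) (x k) ^ p ≤ 2 ^ (p-1) * (2 * Sxy) := by
      rw [hA2, hSxy]
      exact quad_bound hp (A ^ t) hAt hAts x y
    have h5 : (2:ℝ) ^ (p-1) * 2 = 2 ^ p := by
      rw [Real.rpow_sub (by norm_num : (0:ℝ) < 2), Real.rpow_one]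
      field_simp
    have h6 : dLpn p x (T^[s2] x) ^ p ≤ (2 * E) ^ p := by
      rw [h1, Real.mul_rpow (by norm_num) hE0, hEp]
      calc (n:ℝ)⁻¹ * ∑ i, dist (x i) (T^[s2] x i) ^ p
          ≤ (n:ℝ)⁻¹ * (2 ^ (p-1) * (2 * Sxy)) :=
            mul_le_mul_of_nonneg_left (h2.trans h3) (by positivity)
        _ = 2 ^ p * ((n:ℝ)⁻¹ * Sxy) := by rw [← h5]; ring
    calc dLpn p x (T^[s2] x) = (dLpn p x (T^[s2] x) ^ p) ^ p⁻¹ :=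
          (Real.rpow_rpow_inv (dLpn_nonneg _ _) hp0').symm
      _ ≤ ((2 * E) ^ p) ^ p⁻¹ :=
          Real.rpow_le_rpow (Real.rpow_nonneg (dLpn_nonneg _ _) _) h6 (by positivity)
      _ = 2 * E := Real.rpow_rpow_inv (by positivity) hp0'
  have key2y : dLpn p y (T^[s2] y) ≤ 2 * E := by
    have h1 : dLpn p y (T^[s2] y) ^ p = (n:ℝ)⁻¹ * ∑ i, dist (y i) (T^[s2] y i) ^ p :=
      dLpn_rpow hp _ _
    have h2 : ∑ i, dist (y i) (T^[s2] y i) ^ p ≤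
        ∑ i, ∑ k, (A ^ s2) i k * dist (y i) (y k) ^ p :=
      Finset.sum_le_sum fun i _ => dist_iterate_le hp hK hP A hA y s2 i i
    have h3 : ∑ i, ∑ k, (A ^ s2) i k * dist (y i) (y k) ^ p ≤ 2 ^ (p-1) * (2 * Sxy) := by
      rw [hA2, hSxy]
      have hq := quad_bound hp (A ^ t) hAt hAts y x
      rwa [symm_swap_sum (A ^ t) hAts x y] at hq
    have h5 : (2:ℝ) ^ (p-1) * 2 = 2 ^ p := by
      rw [Real.rpow_sub (by norm_num : (0:ℝ) < 2), Real.rpow_one]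
      field_simp
    have h6 : dLpn p y (T^[s2] y) ^ p ≤ (2 * E) ^ p := by
      rw [h1, Real.mul_rpow (by norm_num) hE0, hEp]
      calc (n:ℝ)⁻¹ * ∑ i, dist (y i) (T^[s2] y i) ^ p
          ≤ (n:ℝ)⁻¹ * (2 ^ (p-1) * (2 * Sxy)) :=
            mul_le_mul_of_nonneg_left (h2.trans h3) (by positivity)
        _ = 2 ^ p * ((n:ℝ)⁻¹ * Sxy) := by rw [← h5]; ring
    calc dLpn p y (T^[s2] y) = (dLpn p y (T^[s2] y) ^ p) ^ p⁻¹ :=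
          (Real.rpow_rpow_inv (dLpn_nonneg _ _) hp0').symm
      _ ≤ ((2 * E) ^ p) ^ p⁻¹ :=
          Real.rpow_le_rpow (Real.rpow_nonneg (dLpn_nonneg _ _) _) h6 (by positivity)
      _ = 2 * E := Real.rpow_rpow_inv (by positivity) hp0'
  have hposn : 0 < ∑ i : Fin n, (fun _ : Fin n => (1:ℝ)) i := by
    simp only [Finset.sum_const, Finset.card_univ, Fintype.card_fin, nsmul_eq_mul, mul_one]
    exact hnR
  have hWxy : dist (baryFun bary hn x) (baryFun bary hn y) ≤ Γ * E := by
    have hw := wassersteinDist_le_of_matrix (p := p) hn hp x y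
      (fun i j => (n:ℝ)⁻¹ * (A ^ t) i j)
      (fun i j => mul_nonneg (by positivity) (hAt.1 i j))
      (fun i => by rw [← Finset.mul_sum, hAt.2 i, mul_one])
      (fun j => by rw [← Finset.mul_sum, hAt.col_sum hAts j, mul_one])
      (fun _ => zero_le_one) hposn (fun _ => zero_le_one) hposn
    have hWap := hW.2 (FinProb.mixN (fun _ : Fin n => 1) x (fun _ => zero_le_one) hposn)
      (FinProb.mixN (fun _ : Fin n => 1) y (fun _ => zero_le_one) hposn)
    have heq : (∑ i, ∑ j, ((n:ℝ)⁻¹ * (A ^ t) i j) * dist (x i) (y j) ^ p) ^ p⁻¹ = E := by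
      rw [hE, hSxy]
      congr 1
      rw [Finset.mul_sum]
      exact Finset.sum_congr rfl fun i _ => by
        rw [Finset.mul_sum]
        exact Finset.sum_congr rfl fun j _ => by ring
    exact hWap.trans (mul_le_mul_of_nonneg_left (hw.trans_eq heq) (by linarith))
  have hLHS0 : (0:ℝ) ≤ ((n:ℝ) ^ 2)⁻¹ * ∑ i, ∑ j, dist (x i) (y j) ^ p := by
    have : (0:ℝ) ≤ ∑ i, ∑ j, dist (x i) (y j) ^ p :=
      Finset.sum_nonneg fun i _ => Finset.sum_nonneg fun j _ => Real.rpow_nonneg dist_nonneg _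
    positivity
  have hD : (((n:ℝ) ^ 2)⁻¹ * ∑ i, ∑ j, dist (x i) (y j) ^ p) ^ p⁻¹ ≤
      dLpn p x (fun _ => baryFun bary hn x) +
        dist (baryFun bary hn x) (baryFun bary hn y) +
        dLpn p y (fun _ => baryFun bary hn y) := by
    have hw2 : (0:ℝ) ≤ ((n:ℝ) ^ 2)⁻¹ := by positivity
    have m1 := weighted_Lp_add_le (ι := Fin n × Fin n) hp (((n:ℝ) ^ 2)⁻¹) hw2
      (fun q => dist (x q.1) (baryFun bary hn x) +
        dist (baryFun bary hn x) (baryFun bary hn y))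
      (fun q => dist (baryFun bary hn y) (y q.2))
      (fun q => by positivity) (fun q => dist_nonneg)
    have m2 := weighted_Lp_add_le (ι := Fin n × Fin n) hp (((n:ℝ) ^ 2)⁻¹) hw2
      (fun q => dist (x q.1) (baryFun bary hn x))
      (fun q => dist (baryFun bary hn x) (baryFun bary hn y))
      (fun q => dist_nonneg) (fun q => dist_nonneg)
    have mono : (((n:ℝ) ^ 2)⁻¹ * ∑ i, ∑ j, dist (x i) (y j) ^ p) ^ p⁻¹ ≤
        (((n:ℝ) ^ 2)⁻¹ * ∑ q : Fin n × Fin n,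
          ((dist (x q.1) (baryFun bary hn x) +
            dist (baryFun bary hn x) (baryFun bary hn y)) +
            dist (baryFun bary hn y) (y q.2)) ^ p) ^ p⁻¹ := by
      refine Real.rpow_le_rpow hLHS0 ?_ (by positivity)
      refine mul_le_mul_of_nonneg_left ?_ hw2
      rw [Fintype.sum_prod_type]
      refine Finset.sum_le_sum fun i _ => Finset.sum_le_sum fun j _ => ?_
      exact Real.rpow_le_rpow dist_nonneg (dist_triangle4 _ _ _ _) (by positivity)
    have e1 : (((n:ℝ) ^ 2)⁻¹ *
        ∑ q : Fin n × Fin n, dist (x q.1) (baryFun bary hn x) ^ p) ^ p⁻¹ =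
        dLpn p x (fun _ => baryFun bary hn x) := by
      unfold dLpn
      congr 1
      rw [Fintype.sum_prod_type]
      simp only [Finset.sum_const, Finset.card_univ, Fintype.card_fin, nsmul_eq_mul]
      rw [← Finset.mul_sum, ← mul_assoc]
      congr 1
      rw [sq, mul_inv, mul_assoc, inv_mul_cancel₀ hn', mul_one]
    have e2 : (((n:ℝ) ^ 2)⁻¹ * ∑ _q : Fin n × Fin n,
        dist (baryFun bary hn x) (baryFun bary hn y) ^ p) ^ p⁻¹ =
        dist (baryFun bary hn x) (baryFun bary hn y) := by
      rw [Finset.sum_const, Finset.card_univ, Fintype.card_prod, Fintype.card_fin, nsmul_eq_mul]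
      have hcast : ((n * n : ℕ) : ℝ) = (n:ℝ) ^ 2 := by push_cast; ring
      rw [hcast, ← mul_assoc, inv_mul_cancel₀ (by positivity), one_mul]
      exact Real.rpow_rpow_inv dist_nonneg hp0'
    have e3 : (((n:ℝ) ^ 2)⁻¹ *
        ∑ q : Fin n × Fin n, dist (baryFun bary hn y) (y q.2) ^ p) ^ p⁻¹ =
        dLpn p y (fun _ => baryFun bary hn y) := by
      unfold dLpn
      congr 1
      rw [Fintype.sum_prod_type, Finset.sum_comm]
      simp only [Finset.sum_const, Finset.card_univ, Fintype.card_fin, nsmul_eq_mul]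
      rw [← Finset.mul_sum, ← mul_assoc]
      have hee : ∑ j, dist (baryFun bary hn y) (y j) ^ p =
          ∑ j, dist (y j) (baryFun bary hn y) ^ p :=
        Finset.sum_congr rfl fun j _ => by rw [dist_comm]
      rw [hee]
      congr 1
      rw [sq, mul_inv, mul_assoc, inv_mul_cancel₀ hn', mul_one]
    calc (((n:ℝ) ^ 2)⁻¹ * ∑ i, ∑ j, dist (x i) (y j) ^ p) ^ p⁻¹
        ≤ (((n:ℝ) ^ 2)⁻¹ * ∑ q : Fin n × Fin n,
            ((dist (x q.1) (baryFun bary hn x) +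
              dist (baryFun bary hn x) (baryFun bary hn y)) +
              dist (baryFun bary hn y) (y q.2)) ^ p) ^ p⁻¹ := mono
      _ ≤ (((n:ℝ) ^ 2)⁻¹ * ∑ q : Fin n × Fin n,
            (dist (x q.1) (baryFun bary hn x) +
              dist (baryFun bary hn x) (baryFun bary hn y)) ^ p) ^ p⁻¹ +
          (((n:ℝ) ^ 2)⁻¹ * ∑ q : Fin n × Fin n,
            dist (baryFun bary hn y) (y q.2) ^ p) ^ p⁻¹ := m1
      _ ≤ ((((n:ℝ) ^ 2)⁻¹ * ∑ q : Fin n × Fin n,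
            dist (x q.1) (baryFun bary hn x) ^ p) ^ p⁻¹ +
          (((n:ℝ) ^ 2)⁻¹ * ∑ q : Fin n × Fin n,
            dist (baryFun bary hn x) (baryFun bary hn y) ^ p) ^ p⁻¹) +
          (((n:ℝ) ^ 2)⁻¹ * ∑ q : Fin n × Fin n,
            dist (baryFun bary hn y) (y q.2) ^ p) ^ p⁻¹ :=
          add_le_add_left m2 _
      _ = dLpn p x (fun _ => baryFun bary hn x) +
          dist (baryFun bary hn x) (baryFun bary hn y) +
          dLpn p y (fun _ => baryFun bary hn y) := by rw [e1, e2, e3]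
  -- assemble
  have ha2 : (1 - L ^ s2) * dLpn p x (fun _ => baryFun bary hn x) ≤ (1 + Γ) * (2 * E) :=
    (key1 x).trans (mul_le_mul_of_nonneg_left key2x (by linarith))
  have hb2 : (1 - L ^ s2) * dLpn p y (fun _ => baryFun bary hn y) ≤ (1 + Γ) * (2 * E) :=
    (key1 y).trans (mul_le_mul_of_nonneg_left key2y (by linarith))
  have ha3 : dLpn p x (fun _ => baryFun bary hn x) ≤ 2 * (1 + Γ) * E / (1 - L ^ s2) := by
    rw [le_div_iff₀ hden, mul_comm]
    exact ha2.trans_eq (by ring)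
  have hb3 : dLpn p y (fun _ => baryFun bary hn y) ≤ 2 * (1 + Γ) * E / (1 - L ^ s2) := by
    rw [le_div_iff₀ hden, mul_comm]
    exact hb2.trans_eq (by ring)
  have hCE : C * E = Γ * E + (2 * (1 + Γ) * E / (1 - L ^ s2) +
      2 * (1 + Γ) * E / (1 - L ^ s2)) := by rw [hC]; ring
  have hfinal : (((n:ℝ) ^ 2)⁻¹ * ∑ i, ∑ j, dist (x i) (y j) ^ p) ^ p⁻¹ ≤ C * E := by
    rw [hCE]
    linarith [hD, hWxy, ha3, hb3]
  have hreal : ((n:ℝ) ^ 2)⁻¹ * ∑ i, ∑ j, dist (x i) (y j) ^ p ≤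
      C ^ p * ((n:ℝ)⁻¹ * Sxy) := by
    calc ((n:ℝ) ^ 2)⁻¹ * ∑ i, ∑ j, dist (x i) (y j) ^ p
        = ((((n:ℝ) ^ 2)⁻¹ * ∑ i, ∑ j, dist (x i) (y j) ^ p) ^ p⁻¹) ^ p :=
          (Real.rpow_inv_rpow hLHS0 hp0').symm
      _ ≤ (C * E) ^ p := Real.rpow_le_rpow (Real.rpow_nonneg hLHS0 _) hfinal hp0.le
      _ = C ^ p * E ^ p := Real.mul_rpow hC0 hE0
      _ = C ^ p * ((n:ℝ)⁻¹ * Sxy) := by rw [hEp]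
  calc ENNReal.ofReal (((n:ℝ) ^ 2)⁻¹ * ∑ i, ∑ j, dist (x i) (y j) ^ p)
      ≤ ENNReal.ofReal (C ^ p * ((n:ℝ)⁻¹ * Sxy)) := ENNReal.ofReal_le_ofReal hreal
    _ = ENNReal.ofReal (C ^ p) * (ENNReal.ofReal ((n:ℝ)⁻¹) * ENNReal.ofReal Sxy) := by
        rw [ENNReal.ofReal_mul (Real.rpow_nonneg hC0 _),
          ENNReal.ofReal_mul (by positivity : (0:ℝ) ≤ ((n:ℝ))⁻¹)]
    _ = ENNReal.ofReal (C ^ p) / (n : ℝ≥0∞) * ENNReal.ofReal Sxy := by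
        rw [ENNReal.ofReal_inv_of_pos hnR, ENNReal.ofReal_natCast, div_eq_mul_inv, mul_assoc]

end
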